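/- Let D = Diag(λ₁,…,λ_d) be a diagonal complex d×d matrix with Re(λᵢ) > 0 for all i, and p ∈ ℂᵈ. Define the order-n tensor 𝔄ₙ(p) as the iterated integral over {0 ≤ t₁ < ⋯ < tₙ < ∞} of (−D e^{−Dt₁} p) ⊗ ⋯ ⊗ (−D e^{−Dtₙ} p). Then for every multi-index I = (i₁,…,iₙ) ∈ {1,…,d}ⁿ, the I-th component of 𝔄ₙ(p) equals ∏_{j=1}^{n} (−λ_{i_j} p^{i_j})/(λ_{i_j} + λ_{i_{j+1}} + ⋯ + λ_{i_n}). -/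

import Mathlib

open MeasureTheory

open Filter Topology in
lemma integral_cexp_neg_Ioi_aux {C : ℂ} (hC : 0 < C.re) :
    ∫ x in Set.Ioi (0:ℝ), Complex.exp (-C * x) = C⁻¹ := by
  have hC0 : C ≠ 0 := fun h => by simp [h] at hC
  have hderiv : ∀ x ∈ Set.Ici (0:ℝ),
      HasDerivAt (fun x : ℝ => -C⁻¹ * Complex.exp (-C * x)) (Complex.exp (-C * x)) x := by
    intro x _
    have h1 : HasDerivAt (fun z : ℂ => -C⁻¹ * Complex.exp (-C * z))
        (-C⁻¹ * (Complex.exp (-C * (x:ℂ)) * (-C * 1))) (x : ℂ) :=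
      (((hasDerivAt_id (x:ℂ)).const_mul (-C)).cexp).const_mul _
    have h2 := h1.comp_ofReal
    convert h2 using 1
    field_simp
  have hint : MeasureTheory.IntegrableOn (fun x : ℝ => Complex.exp (-C * x)) (Set.Ioi 0) := by
    apply MeasureTheory.Integrable.mono' (exp_neg_integrableOn_Ioi 0 hC)
    · exact (Continuous.aestronglyMeasurable (by continuity)).restrict
    · filter_upwards with x
      simp [Complex.norm_exp, Complex.mul_re]
  have htend : Filter.Tendsto (fun x : ℝ => -C⁻¹ * Complex.exp (-C * x)) Filter.atTop (nhds 0) := by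
    rw [tendsto_zero_iff_norm_tendsto_zero]
    have hnorm : (fun x : ℝ => ‖-C⁻¹ * Complex.exp (-C * x)‖)
        = fun x : ℝ => ‖C⁻¹‖ * Real.exp (-(C.re * x)) := by
      funext x
      simp [Complex.norm_exp, Complex.mul_re]
    rw [hnorm]
    have h3 : Filter.Tendsto (fun x : ℝ => C.re * x) Filter.atTop Filter.atTop :=
      Filter.Tendsto.const_mul_atTop hC tendsto_id
    have h4 := Real.tendsto_exp_atBot.comp (tendsto_neg_atTop_atBot.comp h3)
    simpa using h4.const_mul ‖C⁻¹‖
  have := MeasureTheory.integral_Ioi_of_hasDerivAt_of_tendsto' hderiv hint htend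
  simpa using this

open Finset in
lemma simplex_exp_integral {n : ℕ} (c : Fin n → ℂ) (hc : ∀ j, 0 < (c j).re) :
    ∫ t in {t : Fin n → ℝ | (∀ i, 0 ≤ t i) ∧ StrictMono t},
        ∏ j, Complex.exp (-(c j) * (t j))
      = ∏ j, (∑ l ∈ Finset.Ici j, c l)⁻¹ := by
  classical
  set L : Matrix (Fin n) (Fin n) ℝ := Matrix.of fun i j => if j ≤ i then 1 else 0 with hL
  have hLtri : L.BlockTriangular OrderDual.toDual := by
    intro i j hij
    have hij' : i < j := hij
    simp only [hL, Matrix.of_apply]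
    rw [if_neg (not_le.mpr hij')]
  have hLdet : L.det = 1 := by
    rw [Matrix.det_of_lowerTriangular L hLtri]
    simp [hL]
  haveI hInv : Invertible L := L.invertibleOfIsUnitDet (by simp [hLdet])
  set e := L.toLinearEquiv' hInv with he
  have he_eq : (⇑e : (Fin n → ℝ) → Fin n → ℝ) = ⇑(Matrix.toLin' L) := rfl
  have he_apply : ∀ s : Fin n → ℝ, ∀ i, e s i = ∑ l ∈ Finset.Iic i, s l := by
    intro s i
    have : e s i = ∑ j, L i j * s j := by
      rw [he_eq, Matrix.toLin'_apply]
      rfl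
    rw [this, ← Finset.sum_subset (Finset.subset_univ (Finset.Iic i))
      (fun j _ hj => by
        have hne : ¬ j ≤ i := fun h => hj (Finset.mem_Iic.mpr h)
        simp [hL, hne])]
    exact Finset.sum_congr rfl fun j hj => by simp [hL, Finset.mem_Iic.mp hj]
  have hmeas : Measurable (⇑e) := by
    rw [he_eq]
    exact (Matrix.toLin' L).continuous_of_finiteDimensional.measurable
  have hmp : MeasurePreserving (⇑e) (volume : Measure (Fin n → ℝ)) volume := by
    refine ⟨hmeas, ?_⟩
    rw [he_eq, Real.map_matrix_volume_pi_eq_smul_volume_pi (by simp [hLdet]), hLdet]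
    simp
  have hemb : MeasurableEmbedding (⇑e) :=
    e.toContinuousLinearEquiv.toHomeomorph.measurableEmbedding
  rw [← hmp.setIntegral_preimage_emb hemb
    (fun t => ∏ j, Complex.exp (-(c j) * (t j)))]
  have hpre : ⇑e ⁻¹' {t : Fin n → ℝ | (∀ i, 0 ≤ t i) ∧ StrictMono t}
      =ᵐ[(volume : Measure (Fin n → ℝ))] Set.pi Set.univ (fun _ : Fin n => Set.Ioi (0:ℝ)) := by
    have hsub1 : Set.pi Set.univ (fun _ : Fin n => Set.Ioi (0:ℝ))
        ⊆ ⇑e ⁻¹' {t : Fin n → ℝ | (∀ i, 0 ≤ t i) ∧ StrictMono t} := by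
      intro s hs
      have hpos : ∀ l, 0 < s l := fun l => hs l (Set.mem_univ l)
      constructor
      · intro i
        rw [he_apply]
        exact Finset.sum_nonneg fun l _ => (hpos l).le
      · intro i k hik
        show e s i < e s k
        rw [he_apply, he_apply]
        exact Finset.sum_lt_sum_of_subset (Finset.Iic_subset_Iic.mpr hik.le)
          (Finset.mem_Iic.mpr le_rfl) (by simpa [Finset.mem_Iic] using hik.not_ge)
          (hpos k) fun l _ _ => (hpos l).le
    have hsub2 : ⇑e ⁻¹' {t : Fin n → ℝ | (∀ i, 0 ≤ t i) ∧ StrictMono t}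
        \ Set.pi Set.univ (fun _ : Fin n => Set.Ioi (0:ℝ))
        ⊆ ⋃ j : Fin n, {s : Fin n → ℝ | s j = 0} := by
      rintro s ⟨hmem, hnpi⟩
      obtain ⟨hnn, hmono⟩ := hmem
      have : ∃ j : Fin n, ¬ (0 < s j) := by
        by_contra hforall
        push_neg at hforall
        exact hnpi fun l _ => hforall l
      obtain ⟨j, hj⟩ := this
      have hj' : s j ≤ 0 := not_lt.mp hj
      by_cases hj0 : (j : ℕ) = 0
      · have hIic : Finset.Iic j = {j} := by
          ext l
          simp only [Finset.mem_Iic, Finset.mem_singleton, Fin.le_def, Fin.ext_iff]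
          omega
        have h0 : (0:ℝ) ≤ e s j := hnn j
        rw [he_apply, hIic, Finset.sum_singleton] at h0
        exact Set.mem_iUnion.mpr ⟨j, le_antisymm hj' h0⟩
      · exfalso
        set j' : Fin n := ⟨(j : ℕ) - 1, lt_of_le_of_lt (Nat.sub_le _ _) j.isLt⟩ with hj'def
        have hlt : j' < j := by
          rw [Fin.lt_def]
          simp only [hj'def]
          omega
        have hIic : Finset.Iic j = insert j (Finset.Iic j') := by
          ext l
          simp only [Finset.mem_Iic, Finset.mem_insert, Fin.le_def, Fin.ext_iff, hj'def]
          omega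
        have hmonojj := hmono hlt
        have : e s j = s j + e s j' := by
          rw [he_apply, he_apply, hIic, Finset.sum_insert (fun h => absurd (Finset.mem_Iic.mp h) (not_le.mpr hlt))]
        have hpos : 0 < s j := by
          have h1 : e s j' < e s j := hmonojj
          rw [this] at h1
          linarith
        exact hj hpos
    have hnull : (volume : Measure (Fin n → ℝ)) (⋃ j : Fin n, {s : Fin n → ℝ | s j = 0}) = 0 := by
      apply measure_iUnion_null
      intro j
      rw [volume_pi]
      exact MeasureTheory.Measure.pi_hyperplane _ j 0
    rw [MeasureTheory.ae_eq_set]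
    constructor
    · exact measure_mono_null hsub2 hnull
    · rw [Set.diff_eq_empty.mpr hsub1]
      exact measure_empty
  rw [Measure.restrict_congr_set hpre]
  have hintegrand : ∀ s : Fin n → ℝ, ∏ j, Complex.exp (-(c j) * ((e s) j))
      = ∏ l, Complex.exp (-(∑ j ∈ Finset.Ici l, c j) * (s l)) := by
    intro s
    rw [← Complex.exp_sum, ← Complex.exp_sum]
    congr 1
    simp_rw [he_apply]
    push_cast
    simp_rw [Finset.mul_sum]
    rw [Finset.sum_comm' (t' := Finset.univ) (s' := fun l => Finset.Ici l)
      (by intro x y; simp [Finset.mem_Iic, Finset.mem_Ici])]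
    apply Finset.sum_congr rfl
    intro l _
    rw [neg_mul, Finset.sum_mul, ← Finset.sum_neg_distrib]
    apply Finset.sum_congr rfl
    intro j _
    ring
  simp_rw [hintegrand]
  rw [← MeasureTheory.integral_indicator (MeasurableSet.univ_pi fun _ => measurableSet_Ioi)]
  have hind : (Set.pi Set.univ fun _ : Fin n => Set.Ioi (0:ℝ)).indicator
      (fun s => ∏ l, Complex.exp (-(∑ j ∈ Finset.Ici l, c j) * (s l)))
      = fun s => ∏ l, (Set.Ioi (0:ℝ)).indicator
          (fun x : ℝ => Complex.exp (-(∑ j ∈ Finset.Ici l, c j) * x)) (s l) := by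
    funext s
    by_cases h : s ∈ Set.pi Set.univ fun _ : Fin n => Set.Ioi (0:ℝ)
    · rw [Set.indicator_of_mem h]
      refine Finset.prod_congr rfl fun l _ => ?_
      rw [Set.indicator_of_mem (h l (Set.mem_univ l))]
    · rw [Set.indicator_of_notMem h]
      have : ∃ l : Fin n, s l ∉ Set.Ioi (0:ℝ) := by
        by_contra hall
        push_neg at hall
        exact h fun l _ => hall l
      obtain ⟨l, hl⟩ := this
      exact (Finset.prod_eq_zero (Finset.mem_univ l) (Set.indicator_of_notMem hl _)).symm
  rw [hind]
  rw [volume_pi]; beta_reduce; rw [MeasureTheory.integral_fintype_prod_eq_prod (ι := Fin n)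
    (fun l x => (Set.Ioi (0:ℝ)).indicator
      (fun x : ℝ => Complex.exp (-(∑ j ∈ Finset.Ici l, c j) * x)) x)]
  refine Finset.prod_congr rfl fun l _ => ?_
  rw [MeasureTheory.integral_indicator measurableSet_Ioi]
  apply integral_cexp_neg_Ioi_aux
  rw [Complex.re_sum]
  exact Finset.sum_pos (fun j _ => hc j) ⟨l, Finset.mem_Ici.mpr le_rfl⟩

/-- for `D = Diag(λ₁,…,λ_d)` with `Re λᵢ > 0` and `p ∈ ℂᵈ`, each component
`I = (i₁,…,iₙ)` of the tensor
`𝔄ₙ(p) = ∫_{0 ≤ t₁ < ⋯ < tₙ < ∞} (−D e^{−Dt₁} p) ⊗ ⋯ ⊗ (−D e^{−Dtₙ} p)` equals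
`∏ⱼ (−λ_{i_j} p^{i_j}) / (λ_{i_j} + ⋯ + λ_{i_n})`. For diagonal `D`, the `i`-th
coordinate of `−D e^{−Dt} p` is `−λᵢ e^{−λᵢ t} pⁱ`, and the `I`-component of a pure
tensor is the product of the corresponding coordinates. -/
theorem diagonal_limit_tensor_component
    {d n : ℕ} (lam : Fin d → ℂ) (hlam : ∀ i, 0 < (lam i).re)
    (p : Fin d → ℂ) (I : Fin n → Fin d) :
    ∫ t in {t : Fin n → ℝ | (∀ i, 0 ≤ t i) ∧ StrictMono t},
        ∏ j, (-(lam (I j)) * Complex.exp (-(lam (I j)) * (t j)) * p (I j))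
      = ∏ j, (-(lam (I j)) * p (I j)) / ∑ l ∈ Finset.Ici j, lam (I l) := by
  have key := simplex_exp_integral (fun j => lam (I j)) (fun j => hlam (I j))
  have hsplit : ∀ t : Fin n → ℝ,
      ∏ j, (-(lam (I j)) * Complex.exp (-(lam (I j)) * (t j)) * p (I j))
      = (∏ j, (-(lam (I j)) * p (I j))) * ∏ j, Complex.exp (-(lam (I j)) * (t j)) := by
    intro t
    rw [← Finset.prod_mul_distrib]
    exact Finset.prod_congr rfl fun j _ => by ring
  simp_rw [hsplit]
  rw [MeasureTheory.integral_const_mul, key, ← Finset.prod_mul_distrib]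
  exact Finset.prod_congr rfl fun j _ => (div_eq_mul_inv _ _).symm
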